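/- Expressed in the expectation parameter η = E[|X|^l] > 0, the differential entropy of the AMEF of degree l equals b_l + (1/l)·log η, where b_l = log(2·Γ(1/l)·(e·l)^(1/l)/l). -/

import Mathlib

open Real MeasureTheory

lemma my_integrable_comp_abs {f : ℝ → ℝ} (hf : IntegrableOn f (Set.Ioi 0)) :
    Integrable (fun x : ℝ => f |x|) := by
  have h1 : IntegrableOn (fun x : ℝ => f |x|) (Set.Ioi 0) := by
    refine hf.congr_fun (fun x hx => ?_) measurableSet_Ioi
    rw [abs_of_pos hx]
  have int_Iic : IntegrableOn (fun x : ℝ ↦ f |x|) (Set.Iic 0) := by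
    rw [← Measure.map_neg_eq_self (volume : Measure ℝ)]
    have m : MeasurableEmbedding fun x : ℝ => -x := (Homeomorph.neg ℝ).measurableEmbedding
    rw [m.integrableOn_map_iff]
    simp_rw [Function.comp_def, abs_neg, Set.neg_preimage, Set.neg_Iic, neg_zero]
    exact Iff.mpr integrableOn_Ici_iff_integrableOn_Ioi h1
  rw [← integrableOn_univ, ← Set.Iic_union_Ioi (a := (0 : ℝ)), integrableOn_union]
  exact ⟨int_Iic, h1⟩

theorem amef_entropy_expectation (l : ℕ) (hl : 1 ≤ l) (θ : ℝ) (hθ : θ < 0)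
    (F η b : ℝ)
    (hF : F = Real.log 2 + Real.log (Real.Gamma (1 / l)) - Real.log l - (1 / l) * Real.log (-θ))
    (hη : η = -1 / (l * θ))
    (hb : b = Real.log (2 * Real.Gamma (1 / l) * (Real.exp 1 * l) ^ ((1 : ℝ) / l) / l)) :
    -∫ x : ℝ, Real.exp (θ * |x| ^ l - F) * Real.log (Real.exp (θ * |x| ^ l - F)) =
      b + (1 / l) * Real.log η := by
  have hl0 : (0 : ℝ) < l := by exact_mod_cast hl
  have hp1 : (1 : ℝ) ≤ l := by exact_mod_cast hl
  have hbpos : (0 : ℝ) < -θ := by linarith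
  have hΓ : 0 < Real.Gamma (1 / l) := Real.Gamma_pos_of_pos (by positivity)
  -- rewrite the integrand
  have key : ∀ x : ℝ, Real.exp (θ * |x| ^ l - F) * Real.log (Real.exp (θ * |x| ^ l - F))
      = (fun t : ℝ => Real.exp (-F) * θ * (t ^ (l : ℝ) * Real.exp (-(-θ) * t ^ (l : ℝ)))
          - Real.exp (-F) * F * Real.exp (-(-θ) * t ^ (l : ℝ))) |x| := by
    intro x
    simp only [Real.log_exp, Real.rpow_natCast, neg_neg]
    rw [Real.exp_sub]
    ring_nf
    rw [Real.exp_neg]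
    ring
  rw [show (fun x : ℝ => Real.exp (θ * |x| ^ l - F) * Real.log (Real.exp (θ * |x| ^ l - F)))
    = (fun x : ℝ => (fun t : ℝ => Real.exp (-F) * θ * (t ^ (l : ℝ) * Real.exp (-(-θ) * t ^ (l : ℝ)))
          - Real.exp (-F) * F * Real.exp (-(-θ) * t ^ (l : ℝ))) |x|) from funext key,
    integral_comp_abs (f := fun t : ℝ => Real.exp (-F) * θ * (t ^ (l : ℝ) * Real.exp (-(-θ) * t ^ (l : ℝ)))
          - Real.exp (-F) * F * Real.exp (-(-θ) * t ^ (l : ℝ)))]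
  -- integrability
  have hI1 : IntegrableOn (fun t : ℝ => t ^ (l : ℝ) * Real.exp (-(-θ) * t ^ (l : ℝ)))
      (Set.Ioi 0) := integrableOn_rpow_mul_exp_neg_mul_rpow (by linarith) hl0 hbpos
  have hI0 : IntegrableOn (fun t : ℝ => Real.exp (-(-θ) * t ^ (l : ℝ))) (Set.Ioi 0) := by
    have := integrableOn_rpow_mul_exp_neg_mul_rpow (p := (l : ℝ)) (s := 0) (by norm_num) hl0 hbpos
    simpa using this
  rw [integral_sub ((hI1.const_mul _)) ((hI0.const_mul _)), integral_const_mul, integral_const_mul,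
    integral_rpow_mul_exp_neg_mul_rpow hl0 (by linarith) hbpos,
    integral_exp_neg_mul_rpow hl0 hbpos]
  -- Gamma simplifications
  have hΓ1 : Real.Gamma (1 / l + 1) = (1 / l) * Real.Gamma (1 / l) := by
    rw [Real.Gamma_add_one (by positivity)]
  have hΓ2 : Real.Gamma (((l : ℝ) + 1) / l) = (1 / l) * Real.Gamma (1 / l) := by
    rw [show ((l : ℝ) + 1) / l = 1 / l + 1 by field_simp; try ring, hΓ1]
  rw [hΓ1, hΓ2]
  -- value of exp(-F)
  have heF : Real.exp (-F) = (l : ℝ) / (2 * Real.Gamma (1 / l) * (-θ) ^ (-(1 : ℝ) / l)) := by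
    rw [hF]
    rw [show -(Real.log 2 + Real.log (Real.Gamma (1 / l)) - Real.log l - (1 / l) * Real.log (-θ))
      = Real.log l - (Real.log 2 + Real.log (Real.Gamma (1 / l)) + (-1 / l) * Real.log (-θ)) by ring]
    rw [Real.exp_sub, Real.exp_add, Real.exp_add, Real.exp_log two_pos, Real.exp_log hΓ,
      Real.exp_log hl0, ← Real.log_rpow hbpos, Real.exp_log (Real.rpow_pos_of_pos hbpos _)]
  have hrne : (0 : ℝ) < (-θ) ^ (-(1 : ℝ) / l) := Real.rpow_pos_of_pos hbpos _
  have hsplit : (-θ : ℝ) ^ (-((l : ℝ) + 1) / l) = (-θ) ^ (-(1 : ℝ) / l) * (-θ)⁻¹ := by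
    rw [show (-((l : ℝ) + 1) / l) = -(1 : ℝ) / l + (-1) by field_simp; try ring,
      Real.rpow_add hbpos, Real.rpow_neg_one]
  rw [hsplit]
  -- now pure algebra: LHS = F + 1/l
  have hLHS : -(2 * (Real.exp (-F) * θ * ((-θ) ^ (-(1:ℝ)/l) * (-θ)⁻¹ * (1 / l) * ((1/l) * Real.Gamma (1/l)))
      - Real.exp (-F) * F * ((-θ) ^ (-(1:ℝ)/l) * ((1/l) * Real.Gamma (1/l)))))
      = F + 1 / l := by
    rw [heF]
    have hθne : θ ≠ 0 := ne_of_lt hθ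
    field_simp
    ring
  rw [hLHS]
  -- final log algebra
  have hη' : η = ((l : ℝ) * (-θ))⁻¹ := by rw [hη]; field_simp; try ring
  have hlogη : Real.log η = -(Real.log l + Real.log (-θ)) := by
    rw [hη', Real.log_inv, Real.log_mul (ne_of_gt hl0) (ne_of_gt hbpos)]
  have hblog : b = Real.log 2 + Real.log (Real.Gamma (1 / l))
      + (1 / l) * (1 + Real.log l) - Real.log l := by
    rw [hb, Real.log_div (by positivity) (ne_of_gt hl0), Real.log_mul (by positivity) (by positivity),
      Real.log_rpow (by positivity), Real.log_mul (ne_of_gt (Real.exp_pos 1)) (ne_of_gt hl0),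
      Real.log_exp, Real.log_mul two_ne_zero (ne_of_gt hΓ)]
  rw [hF, hblog, hlogη]
  ring
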